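/- For every shape parameter λ < 0, the Mills ratio of the skew normal distribution satisfies (1 + λ²) x · (1 - F_λ(x)) / f_λ(x) → 1 as x → ∞. -/

import Mathlib

open Real MeasureTheory Filter Topology

/-- Standard normal density. -/
noncomputable def stdPhi (x : ℝ) : ℝ := (Real.sqrt (2 * Real.pi))⁻¹ * Real.exp (-(x ^ 2) / 2)

/-- Standard normal cdf. -/
noncomputable def stdCdf (x : ℝ) : ℝ := ∫ t in Set.Iic x, stdPhi t

/-- Skew normal density with shape parameter l. -/
noncomputable def snPdf (l x : ℝ) : ℝ := 2 * stdPhi x * stdCdf (l * x)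

/-- Skew normal cdf with shape parameter l. -/
noncomputable def snCdf (l x : ℝ) : ℝ := ∫ t in Set.Iic x, snPdf l t

/-- Gumbel extreme value distribution function. -/
noncomputable def gumbel (x : ℝ) : ℝ := Real.exp (-Real.exp (-x))

open Set

lemma stdPhi_pos (x : ℝ) : 0 < stdPhi x := by
  unfold stdPhi
  have : (0:ℝ) < 2 * Real.pi := by positivity
  positivity

lemma continuous_stdPhi : Continuous stdPhi := by
  unfold stdPhi; fun_prop

lemma hasDerivAt_stdPhi (x : ℝ) : HasDerivAt stdPhi (-x * stdPhi x) x := by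
  have h : HasDerivAt (fun x : ℝ => -(x^2)/2) (-x) x := by
    have := ((hasDerivAt_pow 2 x).neg.div_const 2)
    refine this.congr_deriv ?_
    simp; ring
  have h2 := (h.exp).const_mul (Real.sqrt (2*Real.pi))⁻¹
  refine h2.congr_deriv ?_
  unfold stdPhi; ring

lemma integrable_stdPhi : Integrable stdPhi := by
  have h := (integrable_exp_neg_mul_sq (by norm_num : (0:ℝ) < 1/2)).const_mul
    (Real.sqrt (2*Real.pi))⁻¹
  convert h using 2 with x
  unfold stdPhi
  ring_nf

lemma integral_stdPhi : ∫ x, stdPhi x = 1 := by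
  have h : ∫ x : ℝ, Real.exp (-(1/2 : ℝ) * x ^ 2) = Real.sqrt (Real.pi / (1/2)) :=
    integral_gaussian (1/2)
  have h2 : ∫ x, stdPhi x = (Real.sqrt (2*Real.pi))⁻¹ * ∫ x : ℝ, Real.exp (-(1/2:ℝ) * x ^ 2) := by
    rw [← integral_const_mul]
    congr 1 with x
    unfold stdPhi
    ring_nf
  rw [h2, h]
  rw [show Real.pi / (1/2) = 2 * Real.pi by ring]
  rw [inv_mul_cancel₀ (by positivity)]

lemma integrable_mul_stdPhi : Integrable (fun x => x * stdPhi x) := by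
  have h := (integrable_mul_exp_neg_mul_sq (by norm_num : (0:ℝ) < 1/2)).const_mul
    (Real.sqrt (2*Real.pi))⁻¹
  convert h using 2 with x
  unfold stdPhi
  ring_nf

lemma stdPhi_neg (x : ℝ) : stdPhi (-x) = stdPhi x := by unfold stdPhi; ring_nf

lemma tendsto_stdPhi_atTop : Tendsto stdPhi atTop (𝓝 0) := by
  have : Tendsto (fun x : ℝ => -(x^2)/2) atTop atBot := by
    apply Tendsto.atBot_div_const (by norm_num)
    exact tendsto_neg_atBot_iff.mpr (tendsto_pow_atTop (by norm_num : 2 ≠ 0))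
  have h2 := (Real.tendsto_exp_atBot.comp this).const_mul (Real.sqrt (2*Real.pi))⁻¹
  rw [mul_zero] at h2
  exact h2.congr (fun x => by unfold stdPhi; simp [Function.comp])

lemma stdCdf_nonneg (x : ℝ) : 0 ≤ stdCdf x :=
  setIntegral_nonneg measurableSet_Iic (fun t _ => (stdPhi_pos t).le)

lemma stdCdf_le_one (x : ℝ) : stdCdf x ≤ 1 := by
  rw [← integral_stdPhi]
  exact setIntegral_le_integral integrable_stdPhi
    (Filter.Eventually.of_forall fun t => (stdPhi_pos t).le)

lemma stdCdf_pos (x : ℝ) : 0 < stdCdf x := by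
  rw [stdCdf, setIntegral_pos_iff_support_of_nonneg_ae
    (Filter.Eventually.of_forall fun t => (stdPhi_pos t).le)
    (integrable_stdPhi.integrableOn)]
  have : Function.support stdPhi = Set.univ := by
    ext t; simp [(stdPhi_pos t).ne']
  rw [this, Set.univ_inter]
  simp [Real.volume_Iic]

lemma hasDerivAt_stdCdf (x : ℝ) : HasDerivAt stdCdf (stdPhi x) x := by
  have heq : stdCdf = fun y => stdCdf 0 + ∫ t in (0:ℝ)..y, stdPhi t := by
    funext y
    rw [← intervalIntegral.integral_Iic_sub_Iic integrable_stdPhi.integrableOn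
      integrable_stdPhi.integrableOn]
    simp [stdCdf]
  rw [heq]
  exact ((intervalIntegral.integral_hasDerivAt_right
    (integrable_stdPhi.intervalIntegrable)
    (continuous_stdPhi.aestronglyMeasurable.stronglyMeasurableAtFilter)
    continuous_stdPhi.continuousAt)).const_add _

lemma continuous_stdCdf : Continuous stdCdf :=
  continuous_iff_continuousAt.mpr fun x => (hasDerivAt_stdCdf x).continuousAt

lemma stdCdf_neg_eq (x : ℝ) : stdCdf (-x) = 1 - stdCdf x := by
  have h1 : stdCdf (-x) = ∫ t in Set.Ioi x, stdPhi t := by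
    rw [stdCdf]
    rw [show (∫ t in Set.Iic (-x), stdPhi t) = ∫ t in Set.Iic (-x), stdPhi (-t) from by
      simp_rw [stdPhi_neg]]
    rw [integral_comp_neg_Iic, neg_neg]
  have h2 := intervalIntegral.integral_Iic_add_Ioi (b := x) integrable_stdPhi.integrableOn
    integrable_stdPhi.integrableOn
  rw [integral_stdPhi] at h2
  rw [h1]
  have hx : stdCdf x = ∫ t in Set.Iic x, stdPhi t := rfl
  linarith

lemma integral_mul_stdPhi_Ioi (a : ℝ) : ∫ t in Set.Ioi a, t * stdPhi t = stdPhi a := by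
  have hderiv : ∀ x ∈ Set.Ioi a, HasDerivAt (fun s => -stdPhi s) (x * stdPhi x) x := by
    intro x _
    exact (hasDerivAt_stdPhi x).neg.congr_deriv (by ring)
  have := integral_Ioi_of_hasDerivAt_of_tendsto
    (continuous_stdPhi.neg.continuousWithinAt) hderiv
    integrable_mul_stdPhi.integrableOn
    (tendsto_stdPhi_atTop.neg)
  simpa using this

lemma integral_mul_stdPhi_Iic (u : ℝ) : ∫ t in Set.Iic u, t * stdPhi t = -stdPhi u := by
  have : (∫ t in Set.Iic u, t * stdPhi t) = ∫ t in Set.Iic u, (fun s => -(s * stdPhi s)) (-t) := by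
    congr 1 with t
    simp [stdPhi_neg]
  rw [this, integral_comp_neg_Iic u (fun s => -(s * stdPhi s))]
  rw [integral_neg, integral_mul_stdPhi_Ioi, stdPhi_neg]

lemma mills_upper {u : ℝ} (hu : u < 0) : stdCdf u ≤ stdPhi u / (-u) := by
  have hmono : stdCdf u ≤ ∫ t in Set.Iic u, (t / u) * stdPhi t := by
    rw [stdCdf]
    apply setIntegral_mono_on integrable_stdPhi.integrableOn
    · exact IntegrableOn.congr_fun (integrable_mul_stdPhi.integrableOn.div_const u)
        (fun t _ => by ring) measurableSet_Iic
    · exact measurableSet_Iic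
    · intro t ht
      have h1 : (1:ℝ) ≤ t / u := (le_div_iff_of_neg hu).mpr (by simpa using ht.out)
      nlinarith [stdPhi_pos t]
  have : (∫ t in Set.Iic u, (t / u) * stdPhi t) = (∫ t in Set.Iic u, t * stdPhi t) / u := by
    rw [← integral_div]; congr 1 with t; ring
  rw [this, integral_mul_stdPhi_Iic] at hmono
  calc stdCdf u ≤ -stdPhi u / u := hmono
  _ = stdPhi u / (-u) := by ring

lemma tendsto_stdCdf_atBot : Tendsto stdCdf atBot (𝓝 0) := by
  have hub : Tendsto (fun u => stdPhi u / (-u)) atBot (𝓝 0) := by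
    have h1 : Tendsto (fun v : ℝ => stdPhi v / v) atTop (𝓝 0) :=
      Tendsto.div_atTop tendsto_stdPhi_atTop tendsto_id
    have h2 := h1.comp tendsto_neg_atBot_atTop
    refine h2.congr fun u => ?_
    simp [Function.comp, stdPhi_neg]
  refine tendsto_of_tendsto_of_tendsto_of_le_of_le' tendsto_const_nhds hub ?_ ?_
  · exact Filter.Eventually.of_forall fun u => stdCdf_nonneg u
  · filter_upwards [Filter.Iio_mem_atBot 0] with u hu
    exact mills_upper hu

lemma mills_lower (u : ℝ) : stdPhi u * (-u) / (u^2+1) ≤ stdCdf u := by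
  set N : ℝ → ℝ := fun u => stdCdf u + stdPhi u * u / (u^2+1) with hN
  have hderiv : ∀ x : ℝ, HasDerivAt N (2 * stdPhi x / (x^2+1)^2) x := by
    intro x
    have h1 : HasDerivAt (fun u : ℝ => stdPhi u * u) (-x * stdPhi x * x + stdPhi x) x := by
      exact ((hasDerivAt_stdPhi x).mul (hasDerivAt_id' x)).congr_deriv (by ring)
    have h2 : HasDerivAt (fun u : ℝ => u^2 + 1) (2*x) x := by
      simpa using ((hasDerivAt_pow 2 x).add_const 1)
    have h3 := h1.div h2 (by positivity)
    have h4 := (hasDerivAt_stdCdf x).add h3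
    refine h4.congr_deriv ?_
    field_simp
    ring
  have hmono : StrictMono N := by
    apply strictMono_of_deriv_pos
    intro x
    rw [(hderiv x).deriv]
    have := stdPhi_pos x
    positivity
  have hlim : Tendsto N atBot (𝓝 0) := by
    have h2 : Tendsto (fun u : ℝ => stdPhi u * u / (u^2+1)) atBot (𝓝 0) := by
      have hb : ∀ u : ℝ, |stdPhi u * u / (u^2+1)| ≤ stdPhi u := by
        intro u
        rw [abs_div, abs_mul, abs_of_pos (stdPhi_pos u), abs_of_pos (by positivity : (0:ℝ) < u^2+1)]
        rw [div_le_iff₀ (by positivity)]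
        nlinarith [stdPhi_pos u, sq_nonneg (|u| - 1), sq_abs u]
      have hphi : Tendsto stdPhi atBot (𝓝 0) := by
        have := tendsto_stdPhi_atTop.comp tendsto_neg_atBot_atTop
        refine this.congr fun u => ?_
        simp [Function.comp, stdPhi_neg]
      refine squeeze_zero_norm (fun u => hb u) hphi
    simpa using tendsto_stdCdf_atBot.add h2
  have hge : (0:ℝ) ≤ N u := by
    refine le_of_tendsto hlim ?_
    filter_upwards [Filter.Iic_mem_atBot u] with a ha
    exact (hmono.monotone ha)
  have hge' : 0 ≤ stdCdf u + stdPhi u * u / (u^2+1) := hge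
  have : stdPhi u * (-u) / (u^2+1) = -(stdPhi u * u / (u^2+1)) := by ring
  rw [this]
  linarith

lemma mills_upper' {u : ℝ} (hu : u < 0) : (-u) * stdCdf u ≤ stdPhi u := by
  have := mills_upper hu
  rw [le_div_iff₀ (by linarith : (0:ℝ) < -u)] at this
  linarith [this]

lemma mills_lower' (u : ℝ) : stdPhi u * (-u) ≤ stdCdf u * (u^2+1) := by
  have := mills_lower u
  rw [div_le_iff₀ (by positivity : (0:ℝ) < u^2+1)] at this
  linarith [this]

lemma snPdf_pos (l x : ℝ) : 0 < snPdf l x := by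
  unfold snPdf
  have h1 := stdPhi_pos x
  have h2 := stdCdf_pos (l * x)
  positivity

lemma continuous_snPdf (l : ℝ) : Continuous (snPdf l) := by
  unfold snPdf
  exact (continuous_const.mul continuous_stdPhi).mul
    (continuous_stdCdf.comp (continuous_const.mul continuous_id))

lemma integrable_snPdf (l : ℝ) : Integrable (snPdf l) := by
  apply Integrable.mono' (integrable_stdPhi.const_mul 2) (continuous_snPdf l).aestronglyMeasurable
  refine Filter.Eventually.of_forall fun x => ?_
  rw [Real.norm_eq_abs, abs_of_pos (snPdf_pos l x)]
  unfold snPdf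
  nlinarith [stdPhi_pos x, stdCdf_le_one (l*x), stdCdf_nonneg (l*x)]

lemma integral_snPdf (l : ℝ) : ∫ x, snPdf l x = 1 := by
  have hneg : ∫ x, snPdf l (-x) = ∫ x, snPdf l x := integral_neg_eq_self (snPdf l) volume
  have heq : ∀ x, snPdf l (-x) = 2 * stdPhi x - snPdf l x := by
    intro x
    unfold snPdf
    rw [show stdPhi (-x) = stdPhi x from by unfold stdPhi; ring_nf]
    rw [show l * -x = -(l*x) by ring, stdCdf_neg_eq]
    ring
  rw [integral_congr_ae (Filter.Eventually.of_forall heq)] at hneg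
  rw [integral_sub ((integrable_stdPhi.const_mul 2)) (integrable_snPdf l)] at hneg
  rw [integral_const_mul, integral_stdPhi] at hneg
  linarith

lemma oneSubSnCdf (l x : ℝ) : 1 - snCdf l x = ∫ t in Set.Ioi x, snPdf l t := by
  have h := intervalIntegral.integral_Iic_add_Ioi (b := x) (f := snPdf l) (μ := volume)
    (integrable_snPdf l).integrableOn (integrable_snPdf l).integrableOn
  rw [integral_snPdf] at h
  have : snCdf l x = ∫ t in Set.Iic x, snPdf l t := rfl
  linarith

theorem skew_normal_mills_ratio_neg (l : ℝ) (hl : l < 0) :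
    Tendsto (fun x : ℝ => (1 + l ^ 2) * x * (1 - snCdf l x) / snPdf l x) atTop (𝓝 1) := by
  set c : ℝ := 1 + l ^ 2 with hc_def
  have hc : 0 < c := by positivity
  set f : ℝ → ℝ := snPdf l with hf_def
  set f' : ℝ → ℝ := fun x => -x * f x + 2 * l * stdPhi x * stdPhi (l * x) with hf'_def
  have hderiv_f : ∀ x, HasDerivAt f (f' x) x := by
    intro x
    have h1 : HasDerivAt (fun x => 2 * stdPhi x) (2 * (-x * stdPhi x)) x :=
      (hasDerivAt_stdPhi x).const_mul 2
    have hin : HasDerivAt (fun y : ℝ => l * y) l x := by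
      simpa using (hasDerivAt_id x).const_mul l
    have h2 : HasDerivAt (fun x => stdCdf (l * x)) (stdPhi (l * x) * l) x :=
      (hasDerivAt_stdCdf (l * x)).comp x hin
    have := h1.mul h2
    refine this.congr_deriv ?_
    simp only [hf'_def, hf_def, snPdf]
    ring
  set g : ℝ → ℝ := fun x => f x / (c * x) with hg_def
  set D : ℝ → ℝ := fun x => (f' x * (c * x) - f x * c) / (c * x) ^ 2 with hD_def
  have hderiv_g : ∀ x : ℝ, x ≠ 0 → HasDerivAt g (D x) x := by
    intro x hx
    have hin : HasDerivAt (fun y : ℝ => c * y) c x := by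
      simpa using (hasDerivAt_id x).const_mul c
    have := (hderiv_f x).div hin (by simp [hc.ne', hx])
    exact this
  -- key pointwise bounds for t > 0
  have hlow : ∀ t : ℝ, 0 < t → f t ≤ -D t := by
    intro t ht
    have hu : l * t < 0 := mul_neg_of_neg_of_pos hl ht
    have hm := mills_upper' hu
    have hA := stdPhi_pos t
    have hB := stdPhi_pos (l * t)
    have hC := stdCdf_pos (l * t)
    have hctpos : 0 < (c * t) ^ 2 := by positivity
    have hD : -D t = (f t * c - f' t * (c * t)) / (c * t) ^ 2 := by
      simp only [hD_def]; ring
    rw [hD, le_div_iff₀ hctpos]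
    have key1 : 2 * stdPhi t * (-(l*t)) * (-(l * t) * stdCdf (l * t))
        ≤ 2 * stdPhi t * (-(l*t)) * stdPhi (l * t) :=
      mul_le_mul_of_nonneg_left hm (by nlinarith)
    simp only [hf'_def, hf_def, snPdf, hc_def]
    nlinarith [mul_pos hA hC, sq_nonneg (l*t)]
  have hup : ∀ t : ℝ, 0 < t → -D t ≤ f t * (1 + 2 / (c * t ^ 2)) := by
    intro t ht
    have hu : l * t < 0 := mul_neg_of_neg_of_pos hl ht
    have hm := mills_lower' (l * t)
    have hA := stdPhi_pos t
    have hB := stdPhi_pos (l * t)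
    have hC := stdCdf_pos (l * t)
    have hctpos : 0 < (c * t) ^ 2 := by positivity
    have hD : -D t = (f t * c - f' t * (c * t)) / (c * t) ^ 2 := by
      simp only [hD_def]; ring
    rw [hD, div_le_iff₀ hctpos]
    have hexp : (f t * (1 + 2 / (c * t ^ 2))) * (c * t) ^ 2
        = f t * c ^ 2 * t ^ 2 + 2 * f t * c := by
      field_simp
    rw [hexp]
    have key2 : 2 * stdPhi t * (stdPhi (l*t) * (-(l*t)))
        ≤ 2 * stdPhi t * (stdCdf (l*t) * ((l*t)^2+1)) :=
      mul_le_mul_of_nonneg_left hm (by positivity)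
    simp only [hf'_def, hf_def, snPdf, hc_def]
    nlinarith [mul_pos hA hC, sq_nonneg (l*t), mul_le_mul_of_nonneg_left key2 hc.le]
  -- g tends to 0 at infinity
  have hg0 : Tendsto g atTop (𝓝 0) := by
    have hlim : Tendsto (fun x => 2 * stdPhi x / (c * x)) atTop (𝓝 0) := by
      apply Tendsto.div_atTop (f := fun x => 2 * stdPhi x) (l := atTop)
      · simpa using tendsto_stdPhi_atTop.const_mul 2
      · exact Tendsto.const_mul_atTop hc tendsto_id
    apply squeeze_zero_norm' ?_ hlim
    filter_upwards [Filter.eventually_gt_atTop 0] with x hx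
    have hfx : 0 < f x := snPdf_pos l x
    have hcx : 0 < c * x := by positivity
    rw [Real.norm_eq_abs, abs_of_pos (by positivity : 0 < g x)]
    apply div_le_div_of_nonneg_right ?_ hcx.le |>.trans_eq rfl
    · simp only [hf_def, snPdf]
      nlinarith [stdPhi_pos x, stdCdf_le_one (l*x), stdCdf_nonneg (l*x)]
  -- continuity of f' and D
  have hcontf' : Continuous f' := by
    simp only [hf'_def, hf_def]
    exact (continuous_id.neg.mul (continuous_snPdf l)).add
      (((continuous_const.mul continuous_stdPhi).mul
        (continuous_stdPhi.comp (continuous_const.mul continuous_id))))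
  have hcontD : ∀ t : ℝ, t ≠ 0 → ContinuousAt D t := by
    intro t ht
    simp only [hD_def]
    apply ContinuousAt.div
    · exact ((hcontf'.continuousAt.mul (continuous_const.mul continuous_id).continuousAt).sub
        ((continuous_snPdf l).continuousAt.mul continuousAt_const))
    · fun_prop
    · positivity
  -- integrability of D on Ioi a
  have hDint : ∀ a : ℝ, 0 < a → IntegrableOn D (Set.Ioi a) := by
    intro a ha
    apply Integrable.mono' (((integrable_snPdf l).const_mul (1 + 2/(c*a^2))).integrableOn)
    · exact (ContinuousOn.aestronglyMeasurable
        (fun t ht => ((hcontD t (lt_trans ha ht).ne').continuousWithinAt)) measurableSet_Ioi)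
    · filter_upwards [ae_restrict_mem measurableSet_Ioi] with t ht
      have hta : a < t := ht
      have htpos : 0 < t := lt_trans ha hta
      have h1 := hlow t htpos
      have h2 := hup t htpos
      have hft : 0 < f t := snPdf_pos l t
      have hmono2 : 2 / (c * t^2) ≤ 2 / (c * a^2) := by
        gcongr
      rw [Real.norm_eq_abs, abs_of_neg (by linarith : D t < 0)]
      calc -D t ≤ f t * (1 + 2/(c*t^2)) := h2
      _ ≤ f t * (1 + 2/(c*a^2)) := by nlinarith
      _ = (1 + 2/(c*a^2)) * f t := by ring
  -- FTC on (a, ∞)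
  have hgeq : ∀ a : ℝ, 0 < a → ∫ t in Set.Ioi a, D t = 0 - g a := by
    intro a ha
    exact integral_Ioi_of_hasDerivAt_of_tendsto
      ((hderiv_g a ha.ne').continuousAt.continuousWithinAt)
      (fun x hx => hderiv_g x (lt_trans ha hx).ne') (hDint a ha) hg0
  have hT1 : ∀ a : ℝ, 0 < a → (∫ t in Set.Ioi a, f t) ≤ g a := by
    intro a ha
    have : (∫ t in Set.Ioi a, f t) ≤ ∫ t in Set.Ioi a, -D t := by
      apply setIntegral_mono_on (integrable_snPdf l).integrableOn (hDint a ha).neg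
        measurableSet_Ioi
      intro t ht
      exact hlow t (lt_trans ha ht)
    rw [integral_neg, hgeq a ha] at this
    linarith
  have hT2 : ∀ a : ℝ, 0 < a → g a ≤ (1 + 2/(c*a^2)) * ∫ t in Set.Ioi a, f t := by
    intro a ha
    have : (∫ t in Set.Ioi a, -D t) ≤ ∫ t in Set.Ioi a, (1 + 2/(c*a^2)) * f t := by
      apply setIntegral_mono_on (hDint a ha).neg
        (((integrable_snPdf l).const_mul _).integrableOn) measurableSet_Ioi
      intro t ht
      have htpos : 0 < t := lt_trans ha ht
      have hmono2 : 2 / (c * t^2) ≤ 2 / (c * a^2) := by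
        have := le_of_lt ht.out
        gcongr
      have hft : 0 < f t := snPdf_pos l t
      calc -D t ≤ f t * (1 + 2/(c*t^2)) := hup t htpos
      _ ≤ (1 + 2/(c*a^2)) * f t := by nlinarith
    rw [integral_neg, hgeq a ha, integral_const_mul] at this
    linarith
  -- final squeeze
  have hlow_lim : Tendsto (fun x : ℝ => (1 + 2/(c*x^2))⁻¹) atTop (𝓝 1) := by
    have h0 : Tendsto (fun x : ℝ => 2/(c*x^2)) atTop (𝓝 0) := by
      apply Tendsto.div_atTop tendsto_const_nhds
      exact Tendsto.const_mul_atTop hc (tendsto_pow_atTop (by norm_num))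
    have := ((tendsto_const_nhds.add h0).inv₀ (by norm_num) :
      Tendsto (fun x : ℝ => ((1:ℝ) + 2/(c*x^2))⁻¹) atTop (𝓝 ((1+0)⁻¹)))
    simpa using this
  refine tendsto_of_tendsto_of_tendsto_of_le_of_le' hlow_lim tendsto_const_nhds ?_ ?_
  · filter_upwards [Filter.eventually_gt_atTop 0] with x hx
    set K : ℝ := 1 + 2/(c*x^2) with hK_def
    have hK : 0 < K := by positivity
    have hfx : 0 < f x := snPdf_pos l x
    have hcx : 0 < c * x := by positivity
    have hT := hT2 x hx
    rw [oneSubSnCdf]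
    rw [le_div_iff₀ hfx]
    have hgx : g x = f x / (c * x) := rfl
    rw [hgx, div_le_iff₀ hcx] at hT
    calc K⁻¹ * f x ≤ K⁻¹ * (K * (∫ t in Set.Ioi x, snPdf l t) * (c * x)) := by
          apply mul_le_mul_of_nonneg_left _ (by positivity)
          exact hT
    _ = (1 + l^2) * x * ∫ t in Set.Ioi x, snPdf l t := by
          field_simp
          ring
  · filter_upwards [Filter.eventually_gt_atTop 0] with x hx
    have hfx : 0 < f x := snPdf_pos l x
    have hcx : 0 < c * x := by positivity
    have hT := hT1 x hx
    rw [oneSubSnCdf]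
    rw [div_le_one hfx]
    have hgx : g x = f x / (c * x) := rfl
    rw [hgx, le_div_iff₀ hcx] at hT
    calc (1 + l^2) * x * ∫ t in Set.Ioi x, snPdf l t
        = (∫ t in Set.Ioi x, snPdf l t) * (c * x) := by rw [hc_def]; ring
    _ ≤ f x := hT
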